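/- Let w₁,…,w_τ ∈ ℝ^k with ‖w_s‖₂ ≤ L for all s, and suppose α L² < 1. Then ‖∏_{s=1}^{τ}(I_k − α w_s w_sᵀ)‖₂ ≤ 1, and moreover ‖∏_{s=1}^{τ}(I_k − α w_s w_sᵀ) − (I_k − α ∑_{s=1}^{τ} w_s w_sᵀ)‖₂ ≤ ∑_{z=2}^{τ} (α τ L²)^z. -/

import Mathlib

open Matrix BigOperators

noncomputable def specNorm {m n : ℕ} (A : Matrix (Fin m) (Fin n) ℝ) : ℝ :=
  sSup {r : ℝ | ∃ v : Fin n → ℝ, ∑ i, v i ^ 2 = 1 ∧ r = Real.sqrt (∑ i, (A.mulVec v) i ^ 2)}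

noncomputable def sMin {m n : ℕ} (A : Matrix (Fin m) (Fin n) ℝ) : ℝ :=
  sInf {r : ℝ | ∃ v : Fin n → ℝ, ∑ i, v i ^ 2 = 1 ∧ r = Real.sqrt (∑ i, (A.mulVec v) i ^ 2)}

open scoped Matrix.Norms.L2Operator

namespace Stmt4Aux

lemma euclid_norm {k : ℕ} (v : EuclideanSpace ℝ (Fin k)) :
    ‖v‖ = Real.sqrt (∑ i, v i ^ 2) := by
  rw [EuclideanSpace.norm_eq]
  congr 1
  refine Finset.sum_congr rfl fun i _ => ?_
  rw [Real.norm_eq_abs, sq_abs]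

lemma specNorm_le_norm {m n : ℕ} (A : Matrix (Fin m) (Fin n) ℝ) : specNorm A ≤ ‖A‖ := by
  apply Real.sSup_le
  · rintro r ⟨v, hv, rfl⟩
    have h1 : Real.sqrt (∑ i, (A.mulVec v) i ^ 2)
        = ‖(WithLp.toLp 2 (A.mulVec v))‖ := (euclid_norm (WithLp.toLp 2 (A.mulVec v))).symm
    have h2 : ‖(WithLp.toLp 2 v)‖ = 1 := by
      rw [euclid_norm]
      show Real.sqrt (∑ i, v i ^ 2) = 1
      rw [hv, Real.sqrt_one]
    rw [h1]
    calc ‖(WithLp.toLp 2 (A.mulVec v))‖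
        ≤ ‖A‖ * ‖(WithLp.toLp 2 v)‖ := A.l2_opNorm_mulVec (WithLp.toLp 2 v)
      _ = ‖A‖ := by rw [h2, mul_one]
  · exact norm_nonneg A

lemma opNorm_le {m n : ℕ} (A : Matrix (Fin m) (Fin n) ℝ) {C : ℝ} (hC : 0 ≤ C)
    (h : ∀ x : EuclideanSpace ℝ (Fin n),
      ‖WithLp.toLp 2 (A.mulVec x)‖ ≤ C * ‖x‖) :
    ‖A‖ ≤ C := by
  rw [Matrix.l2_opNorm_def]
  exact ContinuousLinearMap.opNorm_le_bound _ hC fun x => h x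

lemma norm_one_le {k : ℕ} : ‖(1 : Matrix (Fin k) (Fin k) ℝ)‖ ≤ 1 := by
  apply opNorm_le _ zero_le_one
  intro x
  have : WithLp.toLp 2 ((1 : Matrix (Fin k) (Fin k) ℝ).mulVec x) = x := by
    show WithLp.toLp 2 ((1 : Matrix (Fin k) (Fin k) ℝ).mulVec x) = x
    rw [Matrix.one_mulVec]
  rw [this, one_mul]

lemma inner_dot {k : ℕ} (a b : EuclideanSpace ℝ (Fin k)) :
    (inner ℝ a b : ℝ) = ∑ i, a i * b i := by
  rw [PiLp.inner_apply]
  refine Finset.sum_congr rfl fun i _ => ?_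
  simp [RCLike.inner_apply, mul_comm]

lemma mulVec_vmv {k : ℕ} (w v : Fin k → ℝ) :
    (vecMulVec w w).mulVec v = fun i => (w ⬝ᵥ v) * w i := by
  funext i
  simp only [Matrix.mulVec, Matrix.vecMulVec_apply, dotProduct, Finset.sum_mul]
  refine Finset.sum_congr rfl fun j _ => ?_
  ring

lemma norm_w_le {k : ℕ} (L : ℝ) (w : Fin k → ℝ) (hw : Real.sqrt (∑ i, w i ^ 2) ≤ L) :
    ‖WithLp.toLp 2 w‖ ≤ L := by
  rw [euclid_norm]; exact hw

lemma norm_factor_le {k : ℕ} (α L : ℝ) (hα : 0 < α) (hαL : α * L ^ 2 < 1)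
    (w : Fin k → ℝ) (hw : Real.sqrt (∑ i, w i ^ 2) ≤ L) :
    ‖(1 : Matrix (Fin k) (Fin k) ℝ) - α • vecMulVec w w‖ ≤ 1 := by
  apply opNorm_le _ zero_le_one
  intro x
  set w' : EuclideanSpace ℝ (Fin k) := (WithLp.toLp 2 w) with hw'
  set d : ℝ := (inner ℝ x w' : ℝ) with hd
  have hM : (WithLp.toLp 2
      (((1 : Matrix (Fin k) (Fin k) ℝ) - α • vecMulVec w w).mulVec x)) = x - (α * d) • w' := by
    ext i
    show (((1 : Matrix (Fin k) (Fin k) ℝ) - α • vecMulVec w w).mulVec x) i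
      = x i - (α * d) * w i
    rw [Matrix.sub_mulVec, Matrix.one_mulVec, Matrix.smul_mulVec, mulVec_vmv]
    have hdd : d = w ⬝ᵥ x := by
      rw [hd, inner_dot, dotProduct]
      exact Finset.sum_congr rfl fun i _ => mul_comm _ _
    simp [Pi.sub_apply, Pi.smul_apply, hdd, smul_eq_mul]
    ring
  rw [hM]
  have hwL : ‖w'‖ ≤ L := norm_w_le L w hw
  have hwn : (0:ℝ) ≤ ‖w'‖ := norm_nonneg _
  have hwL2 : ‖w'‖ ^ 2 ≤ L ^ 2 := by nlinarith
  have hexp : ‖x - (α * d) • w'‖ ^ 2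
      = ‖x‖ ^ 2 - 2 * (α * d ^ 2) + (α * d) ^ 2 * ‖w'‖ ^ 2 := by
    rw [norm_sub_sq_real, real_inner_smul_right, norm_smul, mul_pow]
    simp only [Real.norm_eq_abs, sq_abs, ← hd]
    ring
  have e1 : (α * d) ^ 2 * ‖w'‖ ^ 2 ≤ (α * d) ^ 2 * L ^ 2 :=
    mul_le_mul_of_nonneg_left hwL2 (sq_nonneg _)
  have e2 : (α * d) ^ 2 * L ^ 2 ≤ α * d ^ 2 := by
    nlinarith [mul_nonneg (mul_nonneg hα.le (sq_nonneg d)) (sub_nonneg.mpr hαL.le)]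
  have hsq : ‖x - (α * d) • w'‖ ^ 2 ≤ ‖x‖ ^ 2 := by
    nlinarith [mul_nonneg hα.le (sq_nonneg d)]
  have := Real.sqrt_le_sqrt hsq
  rwa [Real.sqrt_sq (norm_nonneg _), Real.sqrt_sq (norm_nonneg _), ← one_mul ‖x‖] at this

lemma norm_summand_le {k : ℕ} (α L : ℝ) (hα : 0 < α)
    (w : Fin k → ℝ) (hw : Real.sqrt (∑ i, w i ^ 2) ≤ L) :
    ‖α • vecMulVec w w‖ ≤ α * L ^ 2 := by
  have hwn : (0:ℝ) ≤ Real.sqrt (∑ i, w i ^ 2) := Real.sqrt_nonneg _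
  have hL : 0 ≤ L := le_trans hwn hw
  apply opNorm_le _ (by positivity)
  intro x
  set w' : EuclideanSpace ℝ (Fin k) := (WithLp.toLp 2 w) with hw'
  set d : ℝ := (inner ℝ w' x : ℝ) with hd
  have hM : (WithLp.toLp 2
      ((α • vecMulVec w w).mulVec x)) = (α * d) • w' := by
    ext i
    show ((α • vecMulVec w w).mulVec x) i = (α * d) * w i
    rw [Matrix.smul_mulVec, mulVec_vmv]
    have hdd : d = w ⬝ᵥ x := by rw [hd, inner_dot]; rfl
    simp [Pi.smul_apply, hdd, smul_eq_mul]
    ring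
  rw [hM, norm_smul]
  have hwL : ‖w'‖ ≤ L := norm_w_le L w hw
  have hdb : |d| ≤ ‖w'‖ * ‖x‖ := by
    rw [hd]; exact abs_real_inner_le_norm w' x
  rw [Real.norm_eq_abs, abs_mul, abs_of_pos hα]
  have hxn : (0:ℝ) ≤ ‖x‖ := norm_nonneg _
  have hwn' : (0:ℝ) ≤ ‖w'‖ := norm_nonneg _
  have e2 : ‖w'‖ ^ 2 ≤ L ^ 2 := by nlinarith
  calc α * |d| * ‖w'‖ = α * (|d| * ‖w'‖) := by ring
    _ ≤ α * (L ^ 2 * ‖x‖) := by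
        refine mul_le_mul_of_nonneg_left ?_ hα.le
        calc |d| * ‖w'‖ ≤ (‖w'‖ * ‖x‖) * ‖w'‖ := mul_le_mul_of_nonneg_right hdb hwn'
          _ = ‖w'‖ ^ 2 * ‖x‖ := by ring
          _ ≤ L ^ 2 * ‖x‖ := mul_le_mul_of_nonneg_right e2 hxn
    _ = α * L ^ 2 * ‖x‖ := by ring

lemma list_bound {k : ℕ} (a : ℝ) (ha : 0 ≤ a) (l : List (Matrix (Fin k) (Fin k) ℝ))
    (h1 : ∀ B ∈ l, ‖(1 : Matrix (Fin k) (Fin k) ℝ) - B‖ ≤ 1)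
    (h2 : ∀ B ∈ l, ‖B‖ ≤ a) :
    ‖(l.map (fun B => (1 : Matrix (Fin k) (Fin k) ℝ) - B)).prod‖ ≤ 1 ∧
    ‖l.sum‖ ≤ a * l.length ∧
    ‖(l.map (fun B => (1 : Matrix (Fin k) (Fin k) ℝ) - B)).prod - (1 - l.sum)‖
      ≤ a ^ 2 * (l.length * (l.length - 1) / 2) := by
  induction l with
  | nil =>
    refine ⟨by simpa using norm_one_le, by simp, ?_⟩
    simp
  | cons B t ih =>
    obtain ⟨ihP, ihS, ihE⟩ := ih (fun C hC => h1 C (List.mem_cons_of_mem _ hC))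
      (fun C hC => h2 C (List.mem_cons_of_mem _ hC))
    have hB1 : ‖(1 : Matrix (Fin k) (Fin k) ℝ) - B‖ ≤ 1 := h1 B List.mem_cons_self
    have hBa : ‖B‖ ≤ a := h2 B List.mem_cons_self
    set Pt := (t.map (fun C => (1 : Matrix (Fin k) (Fin k) ℝ) - C)).prod with hPt
    set St := t.sum with hSt
    set n : ℝ := (t.length : ℝ) with hn
    have hn0 : (0:ℝ) ≤ n := Nat.cast_nonneg _
    have hprod : ((B :: t).map (fun C => (1 : Matrix (Fin k) (Fin k) ℝ) - C)).prod
        = (1 - B) * Pt := by simp [hPt]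
    have hsum : (B :: t).sum = B + St := by simp [hSt]
    have hlen : ((B :: t).length : ℝ) = n + 1 := by simp [hn]
    refine ⟨?_, ?_, ?_⟩
    · rw [hprod]
      calc ‖(1 - B) * Pt‖ ≤ ‖(1 : Matrix (Fin k) (Fin k) ℝ) - B‖ * ‖Pt‖ := norm_mul_le _ _
        _ ≤ 1 * 1 := by
            apply mul_le_mul hB1 ihP (norm_nonneg _) zero_le_one
        _ = 1 := one_mul 1
    · rw [hsum, hlen]
      calc ‖B + St‖ ≤ ‖B‖ + ‖St‖ := norm_add_le _ _
        _ ≤ a + a * n := add_le_add hBa ihS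
        _ = a * (n + 1) := by ring
    · rw [hprod, hsum, hlen]
      have key : (1 - B) * Pt - (1 - (B + St))
          = (1 - B) * (Pt - (1 - St)) + B * St := by noncomm_ring
      rw [key]
      calc ‖(1 - B) * (Pt - (1 - St)) + B * St‖
          ≤ ‖(1 - B) * (Pt - (1 - St))‖ + ‖B * St‖ := norm_add_le _ _
        _ ≤ ‖(1 : Matrix (Fin k) (Fin k) ℝ) - B‖ * ‖Pt - (1 - St)‖ + ‖B‖ * ‖St‖ :=
            add_le_add (norm_mul_le _ _) (norm_mul_le _ _)
        _ ≤ 1 * (a ^ 2 * (n * (n - 1) / 2)) + a * (a * n) := by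
            refine add_le_add (mul_le_mul hB1 ihE (norm_nonneg _) zero_le_one) ?_
            refine mul_le_mul hBa ihS (norm_nonneg _) (le_trans (norm_nonneg B) hBa)
        _ = a ^ 2 * ((n + 1) * (n + 1 - 1) / 2) := by ring

end Stmt4Aux

theorem stmt4 {k : ℕ} (τ : ℕ) (α L : ℝ) (hα : 0 < α) (hαL : α * L ^ 2 < 1)
    (w : Fin τ → Fin k → ℝ)
    (hw : ∀ s, Real.sqrt (∑ i, w s i ^ 2) ≤ L) :
    specNorm (((List.finRange τ).map
        (fun s => (1 : Matrix (Fin k) (Fin k) ℝ) - α • vecMulVec (w s) (w s))).prod) ≤ 1 ∧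
    specNorm (((List.finRange τ).map
        (fun s => (1 : Matrix (Fin k) (Fin k) ℝ) - α • vecMulVec (w s) (w s))).prod
      - ((1 : Matrix (Fin k) (Fin k) ℝ) - α • ∑ s, vecMulVec (w s) (w s)))
      ≤ ∑ z ∈ Finset.Icc 2 τ, (α * τ * L ^ 2) ^ z := by
  classical
  set a : ℝ := α * L ^ 2 with haa
  have ha : 0 ≤ a := mul_nonneg hα.le (sq_nonneg L)
  set l : List (Matrix (Fin k) (Fin k) ℝ) :=
    (List.finRange τ).map (fun s => α • vecMulVec (w s) (w s)) with hl
  have hmem : ∀ B ∈ l, ∃ s : Fin τ, B = α • vecMulVec (w s) (w s) := by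
    intro B hB
    rw [hl, List.mem_map] at hB
    obtain ⟨s, _, rfl⟩ := hB
    exact ⟨s, rfl⟩
  have h1 : ∀ B ∈ l, ‖(1 : Matrix (Fin k) (Fin k) ℝ) - B‖ ≤ 1 := by
    intro B hB
    obtain ⟨s, rfl⟩ := hmem B hB
    exact Stmt4Aux.norm_factor_le α L hα hαL (w s) (hw s)
  have h2 : ∀ B ∈ l, ‖B‖ ≤ a := by
    intro B hB
    obtain ⟨s, rfl⟩ := hmem B hB
    exact Stmt4Aux.norm_summand_le α L hα (w s) (hw s)
  obtain ⟨hP, _, hE⟩ := Stmt4Aux.list_bound a ha l h1 h2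
  have hmap : (List.finRange τ).map
      (fun s => (1 : Matrix (Fin k) (Fin k) ℝ) - α • vecMulVec (w s) (w s))
      = l.map (fun B => (1 : Matrix (Fin k) (Fin k) ℝ) - B) := by
    rw [hl, List.map_map]
    rfl
  have hsum : l.sum = α • ∑ s, vecMulVec (w s) (w s) := by
    rw [Finset.smul_sum, hl, Fin.sum_univ_def]
  have hlen : (l.length : ℝ) = (τ : ℝ) := by simp [hl]
  constructor
  · exact le_trans (Stmt4Aux.specNorm_le_norm _) (by rw [hmap]; exact hP)
  · refine le_trans (Stmt4Aux.specNorm_le_norm _) ?_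
    rw [hmap, ← hsum]
    refine le_trans hE ?_
    rw [hlen]
    rcases le_or_gt τ 1 with hτ | hτ
    · rcases Nat.le_one_iff_eq_zero_or_eq_one.mp hτ with rfl | rfl <;> norm_num
    · have h2m : 2 ∈ Finset.Icc 2 τ := Finset.mem_Icc.mpr ⟨le_refl 2, hτ⟩
      have hτ2 : (2:ℝ) ≤ (τ:ℝ) := by exact_mod_cast hτ
      calc a ^ 2 * ((τ:ℝ) * ((τ:ℝ) - 1) / 2) ≤ ((τ:ℝ) * a) ^ 2 := by nlinarith
        _ = (α * (τ:ℝ) * L ^ 2) ^ 2 := by rw [haa]; ring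
        _ ≤ ∑ z ∈ Finset.Icc 2 τ, (α * (τ:ℝ) * L ^ 2) ^ z :=
            Finset.single_le_sum (f := fun z => (α * (τ:ℝ) * L ^ 2) ^ z)
              (fun z _ => pow_nonneg (by positivity) z) h2m
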